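/- Let d ≥ 2 be an integer and let α ∈ (0, 2/(d+1)). Set β = (2 + α(d−1))/(4d) and C₀ = (2^{(d−1)/2} κ_{d−1} / (d κ_d²))^{1/(2d)}, and for λ > 0 set u_λ = C₀ λ^β. Then for every fixed h ≥ 0, lim_{λ → ∞} φ_{λ,α,u_λ}(h) = h^{(d−1)/2}. -/

import Mathlib

open MeasureTheory Real Filter

/-- `kappa j` is the Lebesgue volume of the unit ball in `ℝ^j`. -/
noncomputable def kappa (j : ℕ) : ℝ :=
  (volume (Metric.ball (0 : EuclideanSpace ℝ (Fin j)) 1)).toReal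

/-- Normalized surface area `s₁` of a spherical cap of height `h` (equals `1` for `h > 2`). -/
noncomputable def s1 (d : ℕ) (h : ℝ) : ℝ :=
  if h ≤ 2 then
    (((d : ℝ) - 1) * kappa (d - 1) / ((d : ℝ) * kappa d)) *
      ∫ θ in (0:ℝ)..(Real.arccos (1 - h)), (Real.sin θ) ^ (d - 2)
  else 1

/-- The function `g_{λ,α,u}(h)`. -/
noncomputable def gfun (lam al u h : ℝ) : ℝ :=
  min (max ((lam ^ al / u ^ 2 * h - (1 / 2) * (1 + lam ^ al) / u ^ 4 * h ^ 2) /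
      (1 - h / u ^ 2)) 0) 2

/-- The density `φ_{λ,α,u}(h)`. -/
noncomputable def phi (d : ℕ) (lam al u h : ℝ) : ℝ :=
  lam * (1 + lam ^ al) ^ d / u ^ (d + 1) / (kappa d * lam ^ ((d : ℝ) * al)) *
    s1 d (gfun lam al u h) * (1 - h / u ^ 2) ^ (d - 1)


open Set in
private lemma kappa_pos (j : ℕ) : 0 < kappa j :=
  ENNReal.toReal_pos (Metric.measure_ball_pos _ _ one_pos).ne' measure_ball_lt_top.ne

open Set in
private lemma aux_sinc : Tendsto (fun y : ℝ => Real.sin y / y) (nhdsWithin 0 (Ioi 0)) (nhds 1) := by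
  have h := (Real.hasDerivAt_sin 0)
  rw [hasDerivAt_iff_tendsto_slope] at h
  have h2 : Tendsto (slope Real.sin 0) (nhdsWithin 0 (Ioi 0)) (nhds 1) := by
    simpa [Real.cos_zero] using h.mono_left (nhdsWithin_mono 0 (fun x (hx : x ∈ Ioi (0:ℝ)) => ne_of_gt hx))
  refine h2.congr (fun y => ?_)
  simp [slope_def_field, Real.sin_zero]

open Set in
private lemma aux_B : Tendsto (fun x : ℝ => x ^ 2 / (1 - Real.cos x)) (nhdsWithin 0 (Ioi 0)) (nhds 2) := by
  have hhalf : Tendsto (fun x : ℝ => x / 2) (nhdsWithin 0 (Ioi 0)) (nhdsWithin 0 (Ioi 0)) := by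
    refine tendsto_nhdsWithin_of_tendsto_nhds_of_eventually_within _ ?_ ?_
    · simpa using ((continuous_id.div_const (2:ℝ)).tendsto 0).mono_left nhdsWithin_le_nhds
    · filter_upwards [self_mem_nhdsWithin] with x hx
      exact mem_Ioi.2 (div_pos hx (by norm_num))
  have h2 : Tendsto (fun x : ℝ => Real.sin (x / 2) / (x / 2)) (nhdsWithin 0 (Ioi 0)) (nhds 1) :=
    aux_sinc.comp hhalf
  have h3 : Tendsto (fun x : ℝ => 2 * ((Real.sin (x / 2) / (x / 2))⁻¹) ^ 2)
      (nhdsWithin 0 (Ioi 0)) (nhds 2) := by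
    have := ((h2.inv₀ one_ne_zero).pow 2).const_mul (2:ℝ)
    simpa using this
  refine h3.congr' ?_
  filter_upwards [Ioo_mem_nhdsGT_of_mem (by constructor <;> [rfl; exact Real.pi_pos] : (0:ℝ) ∈ Ico 0 π)] with x hx
  have hx0 : 0 < x := hx.1
  have hs : 0 < Real.sin (x / 2) :=
    Real.sin_pos_of_pos_of_lt_pi (by linarith) (by linarith [hx.2, Real.pi_pos])
  have hcos : 1 - Real.cos x = 2 * Real.sin (x / 2) ^ 2 := by
    have h4 : Real.cos (2 * (x / 2)) = Real.cos (x / 2) ^ 2 - Real.sin (x / 2) ^ 2 :=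
      Real.cos_two_mul' _
    have h5 : Real.sin (x / 2) ^ 2 + Real.cos (x / 2) ^ 2 = 1 := Real.sin_sq_add_cos_sq _
    have h6 : (2 : ℝ) * (x / 2) = x := by ring
    rw [h6] at h4
    nlinarith
  rw [hcos]
  field_simp

open Set in
private lemma aux_int_lim (n : ℕ) :
    Tendsto (fun x : ℝ => (∫ θ in (0:ℝ)..x, Real.sin θ ^ n) / x ^ ((n : ℝ) + 1))
      (nhdsWithin 0 (Ioi 0)) (nhds (1 / ((n : ℝ) + 1))) := by
  have hn1 : (0:ℝ) < (n : ℝ) + 1 := by positivity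
  have hlow : Tendsto (fun x : ℝ => Real.cos x ^ n * (1 / ((n : ℝ) + 1)))
      (nhdsWithin 0 (Ioi 0)) (nhds (1 / ((n : ℝ) + 1))) := by
    have := (((Real.continuous_cos.pow n).tendsto 0).mono_left
      (nhdsWithin_le_nhds (s := Ioi (0:ℝ)))).mul_const (1 / ((n : ℝ) + 1))
    simpa using this
  refine tendsto_of_tendsto_of_tendsto_of_le_of_le' hlow tendsto_const_nhds ?_ ?_
  all_goals
    filter_upwards [Ioo_mem_nhdsGT_of_mem
      (by constructor <;> [rfl; positivity] : (0:ℝ) ∈ Ico 0 (π / 2))] with x hx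
  all_goals
    have hx0 : 0 < x := hx.1
    have hx2 : x < π / 2 := hx.2
    have hxpi : x ≤ π := by linarith [Real.pi_pos]
    have hrp : x ^ ((n : ℝ) + 1) = x ^ (n + 1) := by
      rw [← Real.rpow_natCast x (n + 1)]; push_cast; ring_nf
    have hxp : (0:ℝ) < x ^ (n + 1) := by positivity
    have hint1 : IntervalIntegrable (fun θ : ℝ => Real.sin θ ^ n) volume 0 x :=
      (Real.continuous_sin.pow n).intervalIntegrable 0 x
    have hI1 : ∫ θ in (0:ℝ)..x, θ ^ n = x ^ (n + 1) / ((n : ℝ) + 1) := by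
      rw [integral_pow]; simp
  · -- lower bound
    have hintc : IntervalIntegrable (fun θ : ℝ => Real.cos x ^ n * θ ^ n) volume 0 x :=
      ((continuous_const.mul (continuous_id.pow n)).intervalIntegrable 0 x)
    have hmono : ∫ θ in (0:ℝ)..x, Real.cos x ^ n * θ ^ n ≤ ∫ θ in (0:ℝ)..x, Real.sin θ ^ n := by
      refine intervalIntegral.integral_mono_on hx0.le hintc hint1 (fun θ hθ => ?_)
      have hθ0 : 0 ≤ θ := hθ.1
      have hθx : θ ≤ x := hθ.2
      have hcx : 0 ≤ Real.cos x := Real.cos_nonneg_of_mem_Icc ⟨by linarith, hx2.le⟩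
      have hkey : Real.cos x * θ ≤ Real.sin θ := by
        rcases eq_or_lt_of_le hθ0 with h0 | h0
        · simp [← h0]
        · have hθ2 : θ < π / 2 := lt_of_le_of_lt hθx hx2
          have htan := Real.lt_tan h0 hθ2
          have hcθ : 0 < Real.cos θ := Real.cos_pos_of_mem_Ioo ⟨by linarith, hθ2⟩
          rw [Real.tan_eq_sin_div_cos, lt_div_iff₀ hcθ] at htan
          have hle : Real.cos x ≤ Real.cos θ :=
            Real.cos_le_cos_of_nonneg_of_le_pi hθ0 hxpi hθx
          nlinarith
      calc Real.cos x ^ n * θ ^ n = (Real.cos x * θ) ^ n := by rw [mul_pow]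
        _ ≤ Real.sin θ ^ n := pow_le_pow_left₀ (by positivity) hkey n
    have hIc : ∫ θ in (0:ℝ)..x, Real.cos x ^ n * θ ^ n
        = Real.cos x ^ n * (x ^ (n + 1) / ((n : ℝ) + 1)) := by
      rw [intervalIntegral.integral_const_mul, hI1]
    rw [hrp, le_div_iff₀ hxp]
    calc Real.cos x ^ n * (1 / ((n : ℝ) + 1)) * x ^ (n + 1)
        = Real.cos x ^ n * (x ^ (n + 1) / ((n : ℝ) + 1)) := by ring
      _ ≤ _ := by rw [← hIc]; exact hmono
  · -- upper bound
    have hintu : IntervalIntegrable (fun θ : ℝ => θ ^ n) volume 0 x :=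
      ((continuous_id.pow n).intervalIntegrable 0 x)
    have hmono : ∫ θ in (0:ℝ)..x, Real.sin θ ^ n ≤ ∫ θ in (0:ℝ)..x, θ ^ n := by
      refine intervalIntegral.integral_mono_on hx0.le hint1 hintu (fun θ hθ => ?_)
      have hs0 : 0 ≤ Real.sin θ :=
        Real.sin_nonneg_of_nonneg_of_le_pi hθ.1 (le_trans hθ.2 hxpi)
      exact pow_le_pow_left₀ hs0 (Real.sin_le hθ.1) n
    rw [hrp, div_le_iff₀ hxp]
    calc ∫ θ in (0:ℝ)..x, Real.sin θ ^ n ≤ x ^ (n + 1) / ((n : ℝ) + 1) := by rw [← hI1]; exact hmono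
      _ = 1 / ((n : ℝ) + 1) * x ^ (n + 1) := by ring

open Set in
private lemma aux_s1_lim (d : ℕ) (hd : 2 ≤ d) :
    Tendsto (fun t : ℝ => s1 d t / t ^ (((d : ℝ) - 1) / 2)) (nhdsWithin 0 (Ioi 0))
      (nhds ((2 : ℝ) ^ (((d : ℝ) - 1) / 2) * kappa (d - 1) / ((d : ℝ) * kappa d))) := by
  have hd2 : (2:ℝ) ≤ (d:ℝ) := by exact_mod_cast hd
  set p : ℝ := ((d : ℝ) - 1) / 2 with hpdef
  have hp0 : 0 < p := by rw [hpdef]; linarith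
  set x : ℝ → ℝ := fun t => Real.arccos (1 - t) with hxdef
  have hx : Tendsto x (nhdsWithin 0 (Ioi 0)) (nhdsWithin 0 (Ioi 0)) := by
    refine tendsto_nhdsWithin_of_tendsto_nhds_of_eventually_within _ ?_ ?_
    · have : Continuous x := Real.continuous_arccos.comp (continuous_const.sub continuous_id)
      have h0 : x 0 = 0 := by simp [hxdef]
      simpa [h0] using (this.tendsto 0).mono_left nhdsWithin_le_nhds
    · filter_upwards [self_mem_nhdsWithin] with t ht
      exact Real.arccos_pos.2 (by linarith [mem_Ioi.1 ht])
  have hcast : ((d - 2 : ℕ) : ℝ) + 1 = (d : ℝ) - 1 := by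
    have : ((d - 2 : ℕ) : ℝ) = (d : ℝ) - 2 := by
      push_cast [Nat.cast_sub hd]; ring
    rw [this]; ring
  have h1 : Tendsto (fun t => (∫ θ in (0:ℝ)..x t, Real.sin θ ^ (d - 2)) / (x t) ^ ((d:ℝ) - 1))
      (nhdsWithin 0 (Ioi 0)) (nhds (1 / ((d:ℝ) - 1))) := by
    have := (aux_int_lim (d - 2)).comp hx
    simpa [hcast, Function.comp_def] using this
  have h2 : Tendsto (fun t => ((x t) ^ 2 / t) ^ p) (nhdsWithin 0 (Ioi 0)) (nhds ((2:ℝ) ^ p)) := by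
    have hB : Tendsto (fun t => (x t) ^ 2 / t) (nhdsWithin 0 (Ioi 0)) (nhds 2) := by
      have hcomp := aux_B.comp hx
      refine hcomp.congr' ?_
      filter_upwards [Ioo_mem_nhdsGT_of_mem
        (by constructor <;> norm_num : (0:ℝ) ∈ Ico (0:ℝ) 2)] with t ht
      have hcos : Real.cos (x t) = 1 - t :=
        Real.cos_arccos (by linarith [ht.2]) (by linarith [ht.1])
      simp only [Function.comp, hcos]
      ring_nf
    exact hB.rpow_const (Or.inr hp0.le)
  have hfull : Tendsto (fun t =>
      (((d : ℝ) - 1) * kappa (d - 1) / ((d : ℝ) * kappa d)) *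
        ((∫ θ in (0:ℝ)..x t, Real.sin θ ^ (d - 2)) / (x t) ^ ((d:ℝ) - 1)) *
        ((x t) ^ 2 / t) ^ p)
      (nhdsWithin 0 (Ioi 0))
      (nhds ((2 : ℝ) ^ p * kappa (d - 1) / ((d : ℝ) * kappa d))) := by
    have hc : Tendsto (fun _ : ℝ => (((d : ℝ) - 1) * kappa (d - 1) / ((d : ℝ) * kappa d)))
        (nhdsWithin (0:ℝ) (Ioi 0))
        (nhds (((d : ℝ) - 1) * kappa (d - 1) / ((d : ℝ) * kappa d))) := tendsto_const_nhds
    have hmul := (hc.mul h1).mul h2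
    convert hmul using 2
    have hne : (d:ℝ) - 1 ≠ 0 := by linarith
    field_simp
  refine hfull.congr' ?_
  filter_upwards [Ioo_mem_nhdsGT_of_mem
    (by constructor <;> norm_num : (0:ℝ) ∈ Ico (0:ℝ) 2)] with t ht
  have ht0 : 0 < t := ht.1
  have hxt : 0 < x t := Real.arccos_pos.2 (by linarith [ht.2, ht.1])
  have hs1 : s1 d t = (((d : ℝ) - 1) * kappa (d - 1) / ((d : ℝ) * kappa d)) *
      ∫ θ in (0:ℝ)..x t, Real.sin θ ^ (d - 2) := by
    rw [s1, if_pos ht.2.le]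
  have hxq : ((x t) ^ 2 : ℝ) ^ p = (x t) ^ ((d:ℝ) - 1) := by
    rw [← Real.rpow_natCast (x t) 2, ← Real.rpow_mul hxt.le]
    norm_num [hpdef]
    ring_nf
  have hdiv : (((x t) ^ 2 : ℝ) / t) ^ p = (x t) ^ ((d:ℝ) - 1) / t ^ p := by
    rw [Real.div_rpow (by positivity) ht0.le, hxq]
  have hxne : (x t) ^ ((d:ℝ) - 1) ≠ 0 := (Real.rpow_pos_of_pos hxt _).ne'
  rw [hs1, hdiv, mul_assoc, div_mul_div_comm,
    mul_comm (∫ θ in (0:ℝ)..x t, Real.sin θ ^ (d - 2)) ((x t) ^ ((d:ℝ) - 1)),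
    mul_div_mul_left _ _ hxne]
  exact (mul_div_assoc _ _ _).symm

open Set in
private lemma gfun_raw (A U h : ℝ) (hA : A ≠ 0) (hU : U ≠ 0) :
    (A / U ^ 2 * h - 1 / 2 * (1 + A) / U ^ 4 * h ^ 2) / (1 - h / U ^ 2)
      = (A * h / U ^ 2) *
        ((1 - 1 / 2 * ((1 + A) / A) * (h / U ^ 2)) / (1 - h / U ^ 2)) := by
  have key : A / U ^ 2 * h - 1 / 2 * (1 + A) / U ^ 4 * h ^ 2
      = (A * h / U ^ 2) * (1 - 1 / 2 * ((1 + A) / A) * (h / U ^ 2)) := by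
    field_simp
  rw [key, mul_div_assoc]

open Set in
private lemma final_alg (s lam Bd Ad Qd U2p Ud1 Ap Mp Hp X kd : ℝ)
    (hU2p : U2p ≠ 0) (hMp : Mp ≠ 0) (hUd1 : Ud1 ≠ 0) (hkd : kd ≠ 0) (hAd : Ad ≠ 0)
    (hX : X ≠ 0) (hHp : Hp ≠ 0) (hAp : Ap ≠ 0)
    (hk1 : U2p * Ud1 = X * (lam * Ap)) :
    s / (Ap * Hp / U2p * Mp) * (Mp * (Bd / Ad) * Qd * (Hp / (kd * X)))
      = lam * Bd / Ud1 / (kd * Ad) * s * Qd := by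
  field_simp
  linear_combination (s * Bd * Qd) * hk1

open Set in
set_option maxHeartbeats 1000000 in
/-- for `α ∈ (0, 2/(d+1))`, `β = (2+α(d-1))/(4d)`,
`C₀ = (2^{(d-1)/2} κ_{d-1}/(d κ_d²))^{1/(2d)}` and `u_λ = C₀ λ^β`,
`φ_{λ,α,u_λ}(h) → h^{(d-1)/2}` for every fixed `h ≥ 0`. -/
theorem phi_limit_pos_subcritical (d : ℕ) (hd : 2 ≤ d) (al : ℝ)
    (hal0 : 0 < al) (hal1 : al < 2 / ((d : ℝ) + 1)) (h : ℝ) (hh : 0 ≤ h) :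
    Tendsto (fun lam : ℝ =>
        phi d lam al
          (((2 : ℝ) ^ (((d : ℝ) - 1) / 2) * kappa (d - 1) / ((d : ℝ) * kappa d ^ 2)) ^
              ((1 : ℝ) / (2 * (d : ℝ))) *
            lam ^ ((2 + al * ((d : ℝ) - 1)) / (4 * (d : ℝ)))) h)
      atTop (nhds (h ^ (((d : ℝ) - 1) / 2))) := by
  have hd2 : (2:ℝ) ≤ (d:ℝ) := by exact_mod_cast hd
  have hdpos : (0:ℝ) < (d:ℝ) := by linarith
  have hkd : 0 < kappa d := kappa_pos d
  have hkd1 : 0 < kappa (d - 1) := kappa_pos (d - 1)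
  set p : ℝ := ((d:ℝ) - 1) / 2 with hpdef
  have hppos : 0 < p := by rw [hpdef]; linarith
  set X : ℝ := (2:ℝ) ^ p * kappa (d - 1) / ((d:ℝ) * kappa d ^ 2) with hXdef
  have hX : 0 < X := by
    rw [hXdef]
    exact div_pos (mul_pos (Real.rpow_pos_of_pos two_pos p) hkd1)
      (mul_pos hdpos (pow_pos hkd 2))
  set C0 : ℝ := X ^ ((1:ℝ) / (2 * (d:ℝ))) with hC0def
  have hC0 : 0 < C0 := Real.rpow_pos_of_pos hX _
  set β : ℝ := (2 + al * ((d:ℝ) - 1)) / (4 * (d:ℝ)) with hbdef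
  have hβ : 0 < β := by
    rw [hbdef]
    have : 0 < al * ((d:ℝ) - 1) := mul_pos hal0 (by linarith)
    exact div_pos (by linarith) (by linarith)
  rcases eq_or_lt_of_le hh with h0 | hh0
  · -- h = 0
    rw [← h0, show (0:ℝ) ^ p = 0 from Real.zero_rpow hppos.ne']
    have hz : ∀ lam : ℝ, phi d lam al (C0 * lam ^ β) 0 = 0 := by
      intro lam
      have hg : gfun lam al (C0 * lam ^ β) 0 = 0 := by
        simp [gfun]
      have hs : s1 d 0 = 0 := by simp [s1, Real.arccos_one]
      rw [phi, hg, hs]; ring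
    exact tendsto_const_nhds.congr (fun lam => (hz lam).symm)
  -- main case: 0 < h
  have T_u : Tendsto (fun lam : ℝ => C0 * lam ^ β) atTop atTop :=
    (tendsto_rpow_atTop hβ).const_mul_atTop hC0
  have T_u2 : Tendsto (fun lam : ℝ => (C0 * lam ^ β) ^ 2) atTop atTop := by
    simpa [pow_two] using T_u.atTop_mul_atTop₀ T_u
  have T_q : Tendsto (fun lam : ℝ => h / (C0 * lam ^ β) ^ 2) atTop (nhds 0) := by
    have := T_u2.inv_tendsto_atTop.const_mul h
    simpa [div_eq_mul_inv] using this
  have T_A : Tendsto (fun lam : ℝ => lam ^ al) atTop atTop := tendsto_rpow_atTop hal0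
  have T_E : Tendsto (fun lam : ℝ => (1 + lam ^ al) / lam ^ al) atTop (nhds 1) := by
    have h2 : Tendsto (fun lam : ℝ => (lam ^ al)⁻¹ + 1) atTop (nhds (0 + 1)) :=
      T_A.inv_tendsto_atTop.add_const 1
    rw [zero_add] at h2
    refine h2.congr' ?_
    filter_upwards [eventually_gt_atTop 0] with lam hlam
    have hA : lam ^ al ≠ 0 := (Real.rpow_pos_of_pos hlam al).ne'
    field_simp
  have hγ : 0 < 2 * β - al := by
    have h1 : al * ((d:ℝ) + 1) < 2 := by
      have := (lt_div_iff₀ (by linarith : (0:ℝ) < (d:ℝ) + 1)).1 hal1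
      linarith
    have h2 : 2 * β - al = (2 - al * ((d:ℝ) + 1)) / (2 * (d:ℝ)) := by
      rw [hbdef]; field_simp; ring
    rw [h2]
    exact div_pos (by linarith) (by linarith)
  set w : ℝ → ℝ := fun lam => lam ^ al * h / (C0 * lam ^ β) ^ 2 with hwdef
  set M : ℝ → ℝ := fun lam =>
    (1 - 1 / 2 * ((1 + lam ^ al) / lam ^ al) * (h / (C0 * lam ^ β) ^ 2)) /
      (1 - h / (C0 * lam ^ β) ^ 2) with hMdef
  have T_w : Tendsto w atTop (nhds 0) := by
    have hT := (tendsto_rpow_neg_atTop hγ).mul_const (h / C0 ^ 2)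
    rw [zero_mul] at hT
    refine hT.congr' ?_
    filter_upwards [eventually_gt_atTop 0] with lam hlam
    have h1 : (C0 * lam ^ β) ^ 2 = C0 ^ 2 * lam ^ (2 * β) := by
      rw [mul_pow, ← Real.rpow_natCast (lam ^ β) 2, ← Real.rpow_mul hlam.le]
      norm_num [mul_comm]
    have h2 : lam ^ (-(2 * β - al)) = lam ^ al / lam ^ (2 * β) := by
      rw [← Real.rpow_sub hlam]; ring_nf
    simp only [hwdef]
    rw [h1, h2]
    have hC2 : (C0:ℝ) ^ 2 ≠ 0 := (pow_pos hC0 2).ne'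
    have hl2 : lam ^ (2 * β) ≠ 0 := (Real.rpow_pos_of_pos hlam _).ne'
    field_simp
  have T_Q : Tendsto (fun lam : ℝ => 1 - h / (C0 * lam ^ β) ^ 2) atTop (nhds 1) := by
    have h1 : Tendsto (fun _ : ℝ => (1:ℝ)) atTop (nhds 1) := tendsto_const_nhds
    simpa using h1.sub T_q
  have T_M : Tendsto M atTop (nhds 1) := by
    have hnum : Tendsto (fun lam : ℝ =>
        1 - 1 / 2 * ((1 + lam ^ al) / lam ^ al) * (h / (C0 * lam ^ β) ^ 2)) atTop
        (nhds (1 - 1 / 2 * 1 * 0)) :=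
      tendsto_const_nhds.sub ((T_E.const_mul (1/2)).mul T_q)
    have := hnum.div T_Q (by norm_num)
    simp only [hMdef]
    simpa [Pi.div_def] using this
  have T_r : Tendsto (fun lam => w lam * M lam) atTop (nhds 0) := by
    simpa using T_w.mul T_M
  have Ev1 : ∀ᶠ lam : ℝ in atTop, (1:ℝ) ≤ lam := eventually_ge_atTop 1
  have Ev2 : ∀ᶠ lam : ℝ in atTop, 1/2 < M lam := T_M.eventually (eventually_gt_nhds (by norm_num))
  have Ev3 : ∀ᶠ lam : ℝ in atTop, w lam * M lam < 2 :=
    T_r.eventually (eventually_lt_nhds (by norm_num))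
  have Ev4 : ∀ᶠ lam : ℝ in atTop, h / (C0 * lam ^ β) ^ 2 < 1/2 :=
    T_q.eventually (eventually_lt_nhds (by norm_num))
  have E_g : ∀ᶠ lam : ℝ in atTop, gfun lam al (C0 * lam ^ β) h = w lam * M lam := by
    filter_upwards [Ev1, Ev2, Ev3, Ev4] with lam h1 h2 h3 h4
    have hlam : (0:ℝ) < lam := lt_of_lt_of_le one_pos h1
    have hU : 0 < C0 * lam ^ β := mul_pos hC0 (Real.rpow_pos_of_pos hlam β)
    have hA : 0 < lam ^ al := Real.rpow_pos_of_pos hlam al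
    have hw : 0 < w lam := by
      simp only [hwdef]
      exact div_pos (mul_pos hA hh0) (pow_pos hU 2)
    have hQ : 0 < 1 - h / (C0 * lam ^ β) ^ 2 := by linarith
    have hM : 0 < M lam := lt_trans (by norm_num) h2
    have hr : (lam ^ al / (C0 * lam ^ β) ^ 2 * h -
        1 / 2 * (1 + lam ^ al) / (C0 * lam ^ β) ^ 4 * h ^ 2) /
        (1 - h / (C0 * lam ^ β) ^ 2) = w lam * M lam := by
      simp only [hwdef, hMdef]
      exact gfun_raw (lam ^ al) (C0 * lam ^ β) h hA.ne' hU.ne' 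
    rw [gfun, hr, max_eq_left (mul_pos hw hM).le, min_eq_left h3.le]
  have T_g : Tendsto (fun lam => gfun lam al (C0 * lam ^ β) h) atTop
      (nhdsWithin 0 (Ioi 0)) := by
    refine tendsto_nhdsWithin_of_tendsto_nhds_of_eventually_within _ ?_ ?_
    · exact T_r.congr' (E_g.mono fun lam e => e.symm)
    · filter_upwards [E_g, Ev1, Ev2] with lam e h1 h2
      have hlam : (0:ℝ) < lam := lt_of_lt_of_le one_pos h1
      have hU : 0 < C0 * lam ^ β := mul_pos hC0 (Real.rpow_pos_of_pos hlam β)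
      have hA : 0 < lam ^ al := Real.rpow_pos_of_pos hlam al
      have hw : 0 < w lam := by
        simp only [hwdef]
        exact div_pos (mul_pos hA hh0) (pow_pos hU 2)
      rw [mem_Ioi, e]
      exact mul_pos hw (lt_trans (by norm_num) h2)
  have F1 : Tendsto (fun lam => s1 d (gfun lam al (C0 * lam ^ β) h) /
      (gfun lam al (C0 * lam ^ β) h) ^ p) atTop
      (nhds ((2:ℝ) ^ p * kappa (d - 1) / ((d:ℝ) * kappa d))) := by
    have := (aux_s1_lim d hd).comp T_g
    rw [← hpdef] at this
    simpa [Function.comp_def] using this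
  -- key power identity
  have k1 : ∀ lam : ℝ, 0 < lam →
      (((C0 * lam ^ β) ^ 2 : ℝ)) ^ p * (C0 * lam ^ β) ^ (d + 1)
        = X * (lam * (lam ^ al) ^ p) := by
    intro lam hlam
    have hU : 0 < C0 * lam ^ β := mul_pos hC0 (Real.rpow_pos_of_pos hlam β)
    have e1 : (((C0 * lam ^ β) ^ 2 : ℝ)) ^ p = (C0 * lam ^ β) ^ ((2:ℝ) * p) := by
      rw [← Real.rpow_natCast (C0 * lam ^ β) 2, ← Real.rpow_mul hU.le]
      norm_num
    have e2 : (C0 * lam ^ β) ^ (d + 1) = (C0 * lam ^ β) ^ ((d:ℝ) + 1) := by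
      rw [← Real.rpow_natCast (C0 * lam ^ β) (d + 1)]
      push_cast
      ring_nf
    rw [e1, e2, ← Real.rpow_add hU]
    have e3 : 2 * p + ((d:ℝ) + 1) = 2 * (d:ℝ) := by rw [hpdef]; ring
    rw [e3, Real.mul_rpow hC0.le (Real.rpow_pos_of_pos hlam β).le]
    have e4 : C0 ^ (2 * (d:ℝ)) = X := by
      rw [hC0def, ← Real.rpow_mul hX.le,
        one_div_mul_cancel (by positivity : (2 * (d:ℝ)) ≠ 0), Real.rpow_one]
    have e5 : (lam ^ β) ^ (2 * (d:ℝ)) = lam * (lam ^ al) ^ p := by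
      rw [← Real.rpow_mul hlam.le]
      have hβ2d : β * (2 * (d:ℝ)) = 1 + al * p := by
        rw [hbdef, hpdef]
        have hdne : (d:ℝ) ≠ 0 := hdpos.ne'
        field_simp
        ring
      rw [hβ2d, Real.rpow_add hlam, Real.rpow_one, Real.rpow_mul hlam.le]
    rw [e4, e5]
  -- the auxiliary product and its limit
  have T_H : Tendsto (fun lam : ℝ => (M lam) ^ p * ((1 + lam ^ al) / lam ^ al) ^ d *
      (1 - h / (C0 * lam ^ β) ^ 2) ^ (d - 1) * (h ^ p / (kappa d * X))) atTop
      (nhds (h ^ p / (kappa d * X))) := by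
    have := (((T_M.rpow_const (Or.inr hppos.le)).mul (T_E.pow d)).mul
      (T_Q.pow (d - 1))).mul_const (h ^ p / (kappa d * X))
    simpa using this
  have hval : (2:ℝ) ^ p * kappa (d - 1) / ((d:ℝ) * kappa d) * (h ^ p / (kappa d * X)) = h ^ p := by
    rw [hXdef]
    have h2p : ((2:ℝ) ^ p) ≠ 0 := (Real.rpow_pos_of_pos two_pos p).ne'
    field_simp
  have T_final := F1.mul T_H
  rw [hval] at T_final
  refine T_final.congr' ?_
  filter_upwards [E_g, Ev1, Ev2, Ev4] with lam e h1 h2 h4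
  have hlam : (0:ℝ) < lam := lt_of_lt_of_le one_pos h1
  have hU : 0 < C0 * lam ^ β := mul_pos hC0 (Real.rpow_pos_of_pos hlam β)
  have hA : 0 < lam ^ al := Real.rpow_pos_of_pos hlam al
  have hw : 0 < w lam := by
    simp only [hwdef]
    exact div_pos (mul_pos hA hh0) (pow_pos hU 2)
  have hQ : 0 < 1 - h / (C0 * lam ^ β) ^ 2 := by linarith
  have hM : 0 < M lam := lt_trans (by norm_num) h2
  have hk1 := k1 lam hlam
  have hsplit : (w lam * M lam) ^ p = (w lam) ^ p * (M lam) ^ p :=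
    Real.mul_rpow hw.le hM.le
  have hwp : (w lam) ^ p = (lam ^ al) ^ p * h ^ p / (((C0 * lam ^ β) ^ 2 : ℝ)) ^ p := by
    simp only [hwdef]
    rw [Real.div_rpow (mul_nonneg hA.le hh0.le) (pow_pos hU 2).le p,
      Real.mul_rpow hA.le hh0.le]
  have hk2 : lam ^ ((d:ℝ) * al) = (lam ^ al) ^ d := by
    rw [← Real.rpow_natCast (lam ^ al) d, ← Real.rpow_mul hlam.le, mul_comm]
  have hUne2p : (((C0 * lam ^ β) ^ 2 : ℝ)) ^ p ≠ 0 :=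
    (Real.rpow_pos_of_pos (pow_pos hU 2) p).ne'
  have hMp : (M lam) ^ p ≠ 0 := (Real.rpow_pos_of_pos hM p).ne'
  have hUd1 : (C0 * lam ^ β) ^ (d + 1) ≠ 0 := (pow_pos hU (d + 1)).ne'
  have hkdne : kappa d ≠ 0 := hkd.ne'
  have hAd : (lam ^ al) ^ d ≠ 0 := (pow_pos hA d).ne'
  have hXne : X ≠ 0 := hX.ne'
  have hhp : h ^ p ≠ 0 := (Real.rpow_pos_of_pos hh0 p).ne'
  have hAp : (lam ^ al) ^ p ≠ 0 := (Real.rpow_pos_of_pos hA p).ne'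
  rw [phi, e, hsplit, hwp, hk2, div_pow]
  exact final_alg (s1 d (w lam * M lam)) lam ((1 + lam ^ al) ^ d) ((lam ^ al) ^ d)
    ((1 - h / (C0 * lam ^ β) ^ 2) ^ (d - 1)) (((C0 * lam ^ β) ^ 2) ^ p)
    ((C0 * lam ^ β) ^ (d + 1)) ((lam ^ al) ^ p) ((M lam) ^ p) (h ^ p) X (kappa d)
    hUne2p hMp hUd1 hkdne hAd hXne hhp hAp hk1
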